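/- Let α, c ∈ ℂ with α ≠ 0 and c ≠ 0, and let X = {z ∈ ℂ : exp(α·z) = c} be the zero set of the exponential sum f(z) = e^{αz} − c. Then the 1-density of X exists and d_1(X) = |α|/(2π); that is, the number N(X,r) of points of X in the closed disk of radius r centered at 0 satisfies N(X,r)/(2r) → |α|/(2π) as r → ∞. -/

import Mathlib

set_option autoImplicit false

open Filter

/-- **1-density of the solution set of `e^{αz} = c`.**
For `α ≠ 0` and `c ≠ 0`, the set `X = {z ∈ ℂ : exp (αz) = c}` has 1-density
`|α|/(2π)`: the number `N(X,r)` of its points in the closed disk of radius `r`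
about `0` satisfies `N(X,r)/(2r) → |α|/(2π)` as `r → ∞`. -/
theorem density_of_solutions_exp_eq_const
    (α c : ℂ) (hα : α ≠ 0) (hc : c ≠ 0) :
    Tendsto
      (fun r : ℝ =>
        (Nat.card ↥({z : ℂ | Complex.exp (α * z) = c} ∩ Metric.closedBall (0 : ℂ) r) : ℝ)
          / (2 * r))
      atTop (nhds (‖α‖ / (2 * Real.pi))) := by
  obtain ⟨z₀, hz₀⟩ : ∃ z₀ : ℂ, Complex.exp (α * z₀) = c :=
    ⟨Complex.log c / α, by rw [mul_div_cancel₀ _ hα, Complex.exp_log hc]⟩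
  obtain ⟨w, hw⟩ : ∃ w : ℂ, α * w = 2 * Real.pi * Complex.I :=
    ⟨2 * Real.pi * Complex.I / α, mul_div_cancel₀ _ hα⟩
  have hwne : w ≠ 0 := by
    intro h
    rw [h, mul_zero] at hw
    exact Complex.two_pi_I_ne_zero hw.symm
  have hX : {z : ℂ | Complex.exp (α * z) = c} = Set.range (fun n : ℤ => z₀ + n * w) := by
    ext z
    simp only [Set.mem_setOf_eq, Set.mem_range]
    rw [← hz₀, Complex.exp_eq_exp_iff_exists_int]
    refine exists_congr fun n => ?_
    constructor
    · intro h
      apply mul_left_cancel₀ hα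
      linear_combination (n : ℂ) * hw - h
    · intro h
      linear_combination (n : ℂ) * hw - α * h
  -- injectivity of the lattice map
  have hinj : Function.Injective (fun n : ℤ => z₀ + n * w) := by
    intro m n h
    simp only at h
    have h2 : (m : ℂ) = n := by
      have := mul_right_cancel₀ hwne (by linear_combination h : (m : ℂ) * w = n * w)
      exact this
    exact_mod_cast h2
  set K : ℝ := ‖z₀‖ with hK
  set L : ℝ := ‖w‖ with hLdef
  have hL : 0 < L := by
    rw [hLdef]; exact norm_pos_iff.2 hwne
  have hKnn : 0 ≤ K := norm_nonneg _
  have hLval : ‖α‖ * L = 2 * Real.pi := by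
    rw [hLdef, ← norm_mul]
    rw [hw]
    simp [Real.pi_nonneg, abs_of_nonneg, mul_assoc]
  -- the counted set as an image
  have hcard : ∀ r : ℝ,
      (Nat.card ↥({z : ℂ | Complex.exp (α * z) = c} ∩ Metric.closedBall (0 : ℂ) r) : ℝ)
        = ({n : ℤ | ‖z₀ + n * w‖ ≤ r}).ncard := by
    intro r
    have him : {z : ℂ | Complex.exp (α * z) = c} ∩ Metric.closedBall (0 : ℂ) r
        = (fun n : ℤ => z₀ + n * w) '' {n : ℤ | ‖z₀ + n * w‖ ≤ r} := by
      rw [hX]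
      ext z
      simp only [Set.mem_inter_iff, Set.mem_range, Metric.mem_closedBall, dist_zero_right,
        Set.mem_image, Set.mem_setOf_eq]
      constructor
      · rintro ⟨⟨n, rfl⟩, hr⟩; exact ⟨n, hr, rfl⟩
      · rintro ⟨n, hr, rfl⟩; exact ⟨⟨n, rfl⟩, hr⟩
    rw [him, Nat.card_coe_set_eq, Set.ncard_image_of_injective _ hinj]
  -- bounds on abs
  have habs_up : ∀ n : ℤ, ‖z₀ + n * w‖ ≤ K + |(n : ℝ)| * L := by
    intro n
    calc ‖z₀ + n * w‖ ≤ ‖z₀‖ + ‖(n : ℂ) * w‖ :=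
          norm_add_le _ _
      _ = K + |(n : ℝ)| * L := by rw [norm_mul, Complex.norm_intCast, hK, hLdef]
  have habs_low : ∀ n : ℤ, |(n : ℝ)| * L ≤ K + ‖z₀ + n * w‖ := by
    intro n
    have : ‖(n : ℂ) * w‖ ≤ ‖z₀ + n * w‖ + ‖z₀‖ := by
      have h0 := norm_sub_le (z₀ + n * w) z₀
      rw [show z₀ + n * w - z₀ = (n : ℂ) * w by ring] at h0
      exact h0
    rw [norm_mul, Complex.norm_intCast] at this
    rw [hK]; linarith [this]
  -- subset sandwiching
  have hsub_low : ∀ r : ℝ, (Set.Icc (⌈-((r - K) / L)⌉ : ℤ) ⌊(r - K) / L⌋)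
      ⊆ {n : ℤ | ‖z₀ + n * w‖ ≤ r} := by
    intro r n hn
    obtain ⟨h1, h2⟩ := hn
    have hn1 : -((r - K) / L) ≤ (n : ℝ) := le_trans (Int.le_ceil _) (by exact_mod_cast h1)
    have hn2 : (n : ℝ) ≤ (r - K) / L := le_trans (by exact_mod_cast h2) (Int.floor_le _)
    have habs : |(n : ℝ)| ≤ (r - K) / L := abs_le.2 ⟨hn1, hn2⟩
    have : |(n : ℝ)| * L ≤ r - K := by
      rw [← div_mul_cancel₀ (r - K) hL.ne']
      exact mul_le_mul_of_nonneg_right habs hL.le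
    simp only [Set.mem_setOf_eq]
    linarith [habs_up n]
  have hsub_up : ∀ r : ℝ, {n : ℤ | ‖z₀ + n * w‖ ≤ r}
      ⊆ (Set.Icc (⌈-((r + K) / L)⌉ : ℤ) ⌊(r + K) / L⌋) := by
    intro r n hn
    simp only [Set.mem_setOf_eq] at hn
    have h1 : |(n : ℝ)| * L ≤ r + K := by linarith [habs_low n]
    have h2 : |(n : ℝ)| ≤ (r + K) / L := (le_div_iff₀ hL).2 h1
    obtain ⟨ha, hb⟩ := abs_le.1 h2
    exact ⟨Int.ceil_le.2 (by exact_mod_cast ha), Int.le_floor.2 (by exact_mod_cast hb)⟩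
  -- cardinality bounds
  have hlow : ∀ r : ℝ, 2 * ((r - K) / L) - 1
      ≤ (({n : ℤ | ‖z₀ + n * w‖ ≤ r}).ncard : ℝ) := by
    intro r
    set b : ℝ := (r - K) / L with hb
    have hfin : {n : ℤ | ‖z₀ + n * w‖ ≤ r}.Finite :=
      Set.Finite.subset (Set.finite_Icc _ _) (hsub_up r)
    have h1 : (Set.Icc (⌈-b⌉ : ℤ) ⌊b⌋).ncard
        ≤ ({n : ℤ | ‖z₀ + n * w‖ ≤ r}).ncard :=
      Set.ncard_le_ncard (hsub_low r) hfin
    have h1' : (((Set.Icc (⌈-b⌉ : ℤ) ⌊b⌋).ncard : ℕ) : ℝ)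
        ≤ (({n : ℤ | ‖z₀ + n * w‖ ≤ r}).ncard : ℝ) := by exact_mod_cast h1
    have h2 : ((Set.Icc (⌈-b⌉ : ℤ) ⌊b⌋).ncard : ℝ) = (((⌊b⌋ + 1 - ⌈-b⌉).toNat : ℕ) : ℝ) := by
      rw [← Finset.coe_Icc, Set.ncard_coe_finset, Int.card_Icc]
    have h3 : ((⌊b⌋ + 1 - ⌈-b⌉ : ℤ) : ℝ) ≤ (((⌊b⌋ + 1 - ⌈-b⌉).toNat : ℕ) : ℝ) := by
      exact_mod_cast Int.self_le_toNat _
    have h4 : b - 1 < ((⌊b⌋ : ℤ) : ℝ) := Int.sub_one_lt_floor b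
    have h5 : ((⌈-b⌉ : ℤ) : ℝ) < -b + 1 := by
      have := Int.ceil_lt_add_one (-b); linarith
    have h6 : ((⌊b⌋ + 1 - ⌈-b⌉ : ℤ) : ℝ) = ((⌊b⌋ : ℤ) : ℝ) + 1 - ((⌈-b⌉ : ℤ) : ℝ) := by
      push_cast; ring
    rw [h2] at h1'
    linarith
  have hup : ∀ r : ℝ, 0 ≤ r →
      (({n : ℤ | ‖z₀ + n * w‖ ≤ r}).ncard : ℝ) ≤ 2 * ((r + K) / L) + 1 := by
    intro r hr
    set b : ℝ := (r + K) / L with hb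
    have hbnn : 0 ≤ b := div_nonneg (by linarith) hL.le
    have h1 : ({n : ℤ | ‖z₀ + n * w‖ ≤ r}).ncard
        ≤ (Set.Icc (⌈-b⌉ : ℤ) ⌊b⌋).ncard :=
      Set.ncard_le_ncard (hsub_up r) (Set.finite_Icc _ _)
    have h1' : (({n : ℤ | ‖z₀ + n * w‖ ≤ r}).ncard : ℝ)
        ≤ ((Set.Icc (⌈-b⌉ : ℤ) ⌊b⌋).ncard : ℝ) := by exact_mod_cast h1
    have h2 : ((Set.Icc (⌈-b⌉ : ℤ) ⌊b⌋).ncard : ℝ) = (((⌊b⌋ + 1 - ⌈-b⌉).toNat : ℕ) : ℝ) := by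
      rw [← Finset.coe_Icc, Set.ncard_coe_finset, Int.card_Icc]
    have h3 : (((⌊b⌋ + 1 - ⌈-b⌉).toNat : ℕ) : ℝ) = max (((⌊b⌋ + 1 - ⌈-b⌉ : ℤ)) : ℝ) 0 := by
      rw [show (((⌊b⌋ + 1 - ⌈-b⌉).toNat : ℕ) : ℝ) = (((⌊b⌋ + 1 - ⌈-b⌉).toNat : ℤ) : ℝ) by
        push_cast; ring, Int.toNat_eq_max, Int.cast_max]
      norm_num
    have h4 : ((⌊b⌋ : ℤ) : ℝ) ≤ b := Int.floor_le b
    have h5 : -b ≤ ((⌈-b⌉ : ℤ) : ℝ) := Int.le_ceil (-b)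
    have h6 : ((⌊b⌋ + 1 - ⌈-b⌉ : ℤ) : ℝ) = ((⌊b⌋ : ℤ) : ℝ) + 1 - ((⌈-b⌉ : ℤ) : ℝ) := by
      push_cast; ring
    rw [h2, h3] at h1'
    have h7 : max (((⌊b⌋ + 1 - ⌈-b⌉ : ℤ)) : ℝ) 0 ≤ 2 * b + 1 :=
      max_le (by rw [h6]; linarith) (by linarith)
    linarith
  -- the limit value
  have hval : ‖α‖ / (2 * Real.pi) = 1 / L := by
    rw [div_eq_div_iff Real.two_pi_pos.ne' hL.ne', one_mul]
    linarith [hLval]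
  rw [hval]
  -- squeeze
  have hinv : Tendsto (fun r : ℝ => (2 * r)⁻¹) atTop (nhds 0) :=
    tendsto_inv_atTop_zero.comp (tendsto_id.const_mul_atTop two_pos)
  have hg : Tendsto (fun r : ℝ => (2 * ((r - K) / L) - 1) / (2 * r)) atTop (nhds (1 / L)) := by
    have base : Tendsto (fun r : ℝ => 1 / L - (2 * K / L + 1) * (2 * r)⁻¹) atTop
        (nhds (1 / L)) := by
      have := (tendsto_const_nhds : Tendsto (fun _ : ℝ => 1 / L) atTop (nhds (1 / L))).sub
        (hinv.const_mul (2 * K / L + 1))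
      simpa using this
    refine base.congr' ?_
    filter_upwards [eventually_ne_atTop (0 : ℝ)] with r hr
    field_simp
    ring
  have hh : Tendsto (fun r : ℝ => (2 * ((r + K) / L) + 1) / (2 * r)) atTop (nhds (1 / L)) := by
    have base : Tendsto (fun r : ℝ => 1 / L + (2 * K / L + 1) * (2 * r)⁻¹) atTop
        (nhds (1 / L)) := by
      have := (tendsto_const_nhds : Tendsto (fun _ : ℝ => 1 / L) atTop (nhds (1 / L))).add
        (hinv.const_mul (2 * K / L + 1))
      simpa using this
    refine base.congr' ?_
    filter_upwards [eventually_ne_atTop (0 : ℝ)] with r hr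
    field_simp
    ring
  refine tendsto_of_tendsto_of_tendsto_of_le_of_le' hg hh ?_ ?_
  · filter_upwards [eventually_gt_atTop (0 : ℝ)] with r hr
    rw [hcard r]
    gcongr
    exact hlow r
  · filter_upwards [eventually_gt_atTop (0 : ℝ)] with r hr
    rw [hcard r]
    gcongr
    exact hup r hr.le
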